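/- For n ≥ 4, the cyclic factorization number of the quasi-dihedral (semidihedral) group S_{2^n} of order 2^n is CF₂(S_{2^n}) = 3·2^{n-2}. -/

import Mathlib

open Pointwise

/-- The cyclic factorization number `CF₂(G)`: the number of ordered pairs `(H, K)` of
cyclic subgroups of `G` whose set product `HK` is all of `G`. -/
noncomputable def CF2 (G : Type*) [Group G] : ℕ :=
  Nat.card {p : Subgroup G × Subgroup G //
    IsCyclic p.1 ∧ IsCyclic p.2 ∧ (p.1 : Set G) * (p.2 : Set G) = Set.univ}

private lemma sd_isCyclic_zpowers {G : Type*} [Group G] (g : G) :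
    IsCyclic (Subgroup.zpowers g) := by
  constructor
  refine ⟨⟨g, Subgroup.mem_zpowers g⟩, ?_⟩
  rintro ⟨a, ha⟩
  obtain ⟨k, hk⟩ := Subgroup.mem_zpowers_iff.mp ha
  exact Subgroup.mem_zpowers_iff.mpr ⟨k, Subtype.ext (by simpa using hk)⟩

private lemma sd_exists_zpowers_eq {G : Type*} [Group G] {H : Subgroup G} (h : IsCyclic H) :
    ∃ g : G, H = Subgroup.zpowers g := by
  obtain ⟨⟨g, hg⟩, hgen⟩ := h.exists_generator
  refine ⟨g, le_antisymm (fun a ha => ?_) (Subgroup.zpowers_le.mpr hg)⟩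
  obtain ⟨k, hk⟩ := Subgroup.mem_zpowers_iff.mp (hgen ⟨a, ha⟩)
  exact Subgroup.mem_zpowers_iff.mpr ⟨k, by simpa using congrArg Subtype.val hk⟩

private lemma sd_sq_one_zpow {G : Type*} [Group G] {w : G} (h : w * w = 1) (s : ℤ) :
    w ^ s = 1 ∨ w ^ s = w := by
  have h2 : w ^ (2 : ℤ) = 1 := by rw [zpow_two]; exact h
  rcases Int.even_or_odd s with ⟨t, rfl⟩ | ⟨t, rfl⟩
  · left
    have : t + t = 2 * t := by ring
    rw [this, zpow_mul, h2, one_zpow]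
  · right
    rw [zpow_add, zpow_mul, h2, one_zpow, one_mul, zpow_one]

private lemma sd_int_zero {B d c : ℤ} (hB : 0 < B) (h : d = B * c) (h1 : -B < d) (h2 : d < B) :
    d = 0 := by
  rcases lt_trichotomy c 0 with hc | rfl | hc
  · have : B * c ≤ B * (-1) := mul_le_mul_of_nonneg_left (by omega) (le_of_lt hB)
    omega
  · omega
  · have : B * 1 ≤ B * c := mul_le_mul_of_nonneg_left (by omega) (le_of_lt hB)
    omega

set_option maxHeartbeats 1000000 in
theorem cf2_semidihedral (n : ℕ) (hn : 4 ≤ n) (G : Type*) [Group G] [Fintype G]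
    (x y : G) (hx : x ^ (2 ^ (n - 1)) = 1) (hy : y ^ 2 = 1)
    (hrel : y * x * y = x ^ (2 ^ (n - 2) - 1))
    (hgen : Subgroup.closure {x, y} = ⊤) (hcard : Nat.card G = 2 ^ n) :
    CF2 G = 3 * 2 ^ (n - 2) := by
  obtain ⟨e, rfl⟩ : ∃ e, n = e + 3 := ⟨n - 3, by omega⟩
  have he : 1 ≤ e := by omega
  set q : ℕ := 2 ^ e with hqdef
  have hq2 : 2 ≤ q := by
    calc 2 = 2 ^ 1 := rfl
    _ ≤ 2 ^ e := Nat.pow_le_pow_right (by norm_num) he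
  -- normalize the hypotheses
  have hxq : x ^ (4 * q) = 1 := by
    have h1 : (4 * q) = 2 ^ (e + 3 - 1) := by
      show 4 * q = 2 ^ (e + 2); rw [hqdef, pow_add]; ring
    rw [h1]; exact hx
  have hrelq : y * x * y = x ^ (2 * q - 1) := by
    have h1 : (2 * q) = 2 ^ (e + 3 - 2) := by
      show 2 * q = 2 ^ (e + 1); rw [hqdef, pow_add]; ring
    rw [h1]; exact hrel
  have hcardq : Nat.card G = 8 * q := by
    rw [hcard]; rw [hqdef]; rw [pow_add]; ring
  set R : ℤ := 2 * (q : ℤ) - 1 with hR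
  have hyy : y * y = 1 := by rw [← pow_two]; exact hy
  have hyinv : y⁻¹ = y := inv_eq_of_mul_eq_one_right hyy
  have hx4z : x ^ (4 * (q : ℤ)) = 1 := by
    have : ((4 * q : ℕ) : ℤ) = 4 * (q : ℤ) := by push_cast; ring
    rw [← this, zpow_natCast, hxq]
  have hrelz : y * x * y = x ^ R := by
    rw [hrelq, ← zpow_natCast]
    congr 1
    rw [hR]; push_cast [Nat.cast_sub (by omega : 1 ≤ 2 * q)]; ring
  have hconj : ∀ k : ℤ, y * x ^ k * y = x ^ (R * k) := by
    intro k
    have h1 : y * x * y⁻¹ = x ^ R := by rw [hyinv]; exact hrelz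
    calc y * x ^ k * y = y * x ^ k * y⁻¹ := by rw [hyinv]
    _ = (y * x * y⁻¹) ^ k := (conj_zpow).symm
    _ = (x ^ R) ^ k := by rw [h1]
    _ = x ^ (R * k) := by rw [← zpow_mul]
  have hswap : ∀ k : ℤ, y * x ^ k = x ^ (R * k) * y := by
    intro k
    calc y * x ^ k = y * x ^ k * (y * y) := by rw [hyy, mul_one]
    _ = (y * x ^ k * y) * y := by group
    _ = x ^ (R * k) * y := by rw [hconj]
  set X : Subgroup G := Subgroup.zpowers x with hXdef
  -- X is normal
  have hXnorm : X.Normal := by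
    rw [← Subgroup.normalizer_eq_top_iff]
    have hyn : y ∈ Subgroup.normalizer (X : Set G) := by
      rw [Subgroup.mem_normalizer_iff]
      intro h
      constructor
      · rintro ⟨k, rfl⟩
        rw [hyinv]
        exact ⟨R * k, (hconj k).symm⟩
      · intro hmem
        rw [hyinv] at hmem
        obtain ⟨k, hk⟩ := Subgroup.mem_zpowers_iff.mp hmem
        have : h = y * x ^ k * y := by
          rw [hk, show y * (y * h * y) * y = (y * y) * h * (y * y) from by group, hyy,
            one_mul, mul_one]
        rw [this, hconj]
        exact Subgroup.zpow_mem _ (Subgroup.mem_zpowers x) _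
    have hxn : x ∈ Subgroup.normalizer (X : Set G) := Subgroup.le_normalizer (Subgroup.mem_zpowers x)
    have : Subgroup.closure {x, y} ≤ Subgroup.normalizer (X : Set G) := by
      rw [Subgroup.closure_le]
      rintro a (rfl | rfl) <;> assumption
    rw [hgen] at this
    exact top_le_iff.mp this
  -- the quotient
  have hQtop : ∀ gQ : G ⧸ X, gQ ∈ Subgroup.zpowers ((y : G ⧸ X)) := by
    have h2 : Subgroup.map (QuotientGroup.mk' X) ⊤ = ⊤ := by
      rw [← MonoidHom.range_eq_map]
      exact MonoidHom.range_eq_top_of_surjective _ (QuotientGroup.mk'_surjective X)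
    have h3 : (⊤ : Subgroup (G ⧸ X)) ≤ Subgroup.zpowers ((y : G ⧸ X)) := by
      rw [← h2, ← hgen, MonoidHom.map_closure, Subgroup.closure_le]
      rintro a ⟨b, hb, rfl⟩
      rcases hb with hb | hb
      · rw [hb]
        have h4 : (QuotientGroup.mk' X) x = 1 :=
          (QuotientGroup.eq_one_iff x).mpr (Subgroup.mem_zpowers x)
        rw [h4]; exact Subgroup.one_mem _
      · rw [hb]; exact Subgroup.mem_zpowers _
    exact fun gQ => h3 trivial
  have hyQ2 : (y : G ⧸ X) * (y : G ⧸ X) = 1 := by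
    rw [← QuotientGroup.mk_mul, hyy, QuotientGroup.mk_one]
  have hcardX : Nat.card X = 4 * q ∧ Nat.card (G ⧸ X) = 2 := by
    have hprod := Subgroup.card_eq_card_quotient_mul_card_subgroup X
    have hXle : Nat.card X ≤ 4 * q := by
      have h1 : Nat.card X = orderOf x := Nat.card_zpowers x
      rw [h1]
      exact Nat.le_of_dvd (by omega) (orderOf_dvd_of_pow_eq_one hxq)
    have hQle : Nat.card (G ⧸ X) ≤ 2 := by
      have htop : Subgroup.zpowers ((y : G ⧸ X)) = ⊤ :=
        eq_top_iff.mpr fun g _ => hQtop g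
      have h1 : Nat.card (G ⧸ X) = orderOf ((y : G ⧸ X)) := by
        calc Nat.card (G ⧸ X) = Nat.card (⊤ : Subgroup (G ⧸ X)) := Subgroup.card_top.symm
        _ = Nat.card (Subgroup.zpowers ((y : G ⧸ X))) := by rw [htop]
        _ = orderOf ((y : G ⧸ X)) := Nat.card_zpowers _
      rw [h1]
      exact Nat.le_of_dvd (by omega)
        (orderOf_dvd_of_pow_eq_one (by rw [pow_two]; exact hyQ2))
    rw [hcardq] at hprod
    set a := Nat.card (G ⧸ X) with ha
    set b := Nat.card X with hb
    interval_cases a <;> omega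
  have hordx : orderOf x = 4 * q := by
    rw [← Nat.card_zpowers]; exact hcardX.1
  have hzpowinj : ∀ a b : ℤ, x ^ a = x ^ b ↔ (4 * (q : ℤ)) ∣ (b - a) := by
    intro a b
    rw [zpow_eq_zpow_iff_modEq, hordx, Int.modEq_iff_dvd]
    have hc : ((4 * q : ℕ) : ℤ) = 4 * (q : ℤ) := by push_cast; ring
    rw [hc]
  have hyX : y ∉ X := by
    intro hyx
    have hXtop : X = ⊤ := by
      rw [eq_top_iff, ← hgen, Subgroup.closure_le]
      rintro a (rfl | rfl)
      · exact Subgroup.mem_zpowers _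
      · exact hyx
    have := hcardX.1
    rw [hXtop, Subgroup.card_top, hcardq] at this
    omega
  have hdecomp : ∀ g : G, (∃ k : ℤ, g = x ^ k) ∨ (∃ k : ℤ, g = x ^ k * y) := by
    intro g
    by_cases hg : g ∈ X
    · left; obtain ⟨k, hk⟩ := Subgroup.mem_zpowers_iff.mp hg; exact ⟨k, hk.symm⟩
    · right
      obtain ⟨t, ht⟩ := Subgroup.mem_zpowers_iff.mp (hQtop (g : G ⧸ X))
      rcases sd_sq_one_zpow hyQ2 t with h | h
      · exact absurd ((QuotientGroup.eq_one_iff g).mp (ht.symm.trans h)) hg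
      · have hgy : (g : G ⧸ X) = (y : G ⧸ X) := ht.symm.trans h
        obtain ⟨k, hk⟩ := Subgroup.mem_zpowers_iff.mp (QuotientGroup.eq.mp hgy)
        have hg2 : g = y * (x ^ k)⁻¹ := by
          have h5 : g * (g⁻¹ * y) = y := by group
          rw [← hk] at h5
          exact eq_mul_inv_of_mul_eq h5
        rw [← zpow_neg, hswap] at hg2
        exact ⟨R * (-k), hg2⟩
  have hout : ∀ k : ℤ, x ^ k * y ∉ X := by
    intro k hk
    apply hyX
    have : y = (x ^ k)⁻¹ * (x ^ k * y) := by group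
    rw [this]
    exact X.mul_mem (X.inv_mem (Subgroup.zpow_mem _ (Subgroup.mem_zpowers x) _)) hk
  have hsq : ∀ k : ℤ, (x ^ k * y) * (x ^ k * y) = x ^ (2 * (q:ℤ) * k) := by
    intro k
    have h1 : (x ^ k * y) * (x ^ k * y) = x ^ k * (y * x ^ k * y) := by group
    rw [h1, hconj, ← zpow_add]
    congr 1
    rw [hR]; ring
  set z : G := x ^ (2 * (q:ℤ)) with hzdef
  have hzz : z * z = 1 := by
    rw [hzdef, ← zpow_add]
    have : 2 * (q:ℤ) + 2 * (q:ℤ) = 4 * (q:ℤ) := by ring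
    rw [this, hx4z]
  have hzne : z ≠ 1 := by
    intro h
    have : x ^ (2 * (q:ℤ)) = x ^ (0 : ℤ) := by rw [zpow_zero]; exact h
    obtain ⟨c, hc⟩ := (hzpowinj _ _).mp this
    have h2 : 2 * (q:ℤ) * 1 = 2 * (q:ℤ) * (-2 * c) := by push_cast at hc ⊢; linarith [hc]
    have := mul_left_cancel₀ (by positivity : (2 * (q:ℤ)) ≠ 0) h2
    omega
  have hzX : z ∈ X := Subgroup.zpow_mem _ (Subgroup.mem_zpowers x) _
  have hzy : z * y = y * z := by
    have h3 : y * z * y = z := by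
      rw [hzdef, hconj, hzpowinj]
      exact ⟨1 - (q : ℤ), by rw [hR]; ring⟩
    calc z * y = (y * y) * z * y := by rw [hyy, one_mul]
    _ = y * (y * z * y) := by group
    _ = y * z := by rw [h3]
  have hzcomm : ∀ g : G, z * g = g * z := by
    intro g
    rcases hdecomp g with ⟨k, rfl⟩ | ⟨k, rfl⟩
    · rw [hzdef, ← zpow_add, ← zpow_add, add_comm]
    · calc z * (x ^ k * y) = (z * x ^ k) * y := by rw [mul_assoc]
      _ = (x ^ k * z) * y := by rw [hzdef, ← zpow_add, ← zpow_add, add_comm]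
      _ = x ^ k * (z * y) := by rw [mul_assoc]
      _ = x ^ k * (y * z) := by rw [hzy]
      _ = (x ^ k * y) * z := by rw [mul_assoc]
  -- powers of an outside element
  have hww : ∀ k : ℤ, x ^ (2 * (q:ℤ) * k) * x ^ (2 * (q:ℤ) * k) = 1 := by
    intro k
    rw [← zpow_add]
    have : 2 * (q:ℤ) * k + 2 * (q:ℤ) * k = 4 * (q:ℤ) * k := by ring
    rw [this, zpow_mul, hx4z, one_zpow]
  have hpows : ∀ k t : ℤ, (x ^ k * y) ^ t = 1 ∨ (x ^ k * y) ^ t = x ^ (2 * (q:ℤ) * k) ∨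
      (x ^ k * y) ^ t = x ^ k * y ∨ (x ^ k * y) ^ t = x ^ (2 * (q:ℤ) * k) * (x ^ k * y) := by
    intro k t
    set g := x ^ k * y with hg
    have hg2 : g ^ (2:ℤ) = x ^ (2 * (q:ℤ) * k) := by rw [zpow_two]; exact hsq k
    rcases Int.even_or_odd t with ⟨s, rfl⟩ | ⟨s, hts⟩
    · have : s + s = 2 * s := by ring
      rw [this, zpow_mul, hg2]
      rcases sd_sq_one_zpow (hww k) s with h | h
      · exact Or.inl h
      · exact Or.inr (Or.inl h)
    · rw [hts, zpow_add, zpow_mul, hg2, zpow_one]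
      rcases sd_sq_one_zpow (hww k) s with h | h
      · rw [h, one_mul]; exact Or.inr (Or.inr (Or.inl rfl))
      · rw [h]; exact Or.inr (Or.inr (Or.inr rfl))
  have hwval : ∀ k : ℤ, x ^ (2 * (q:ℤ) * k) = 1 ∨ x ^ (2 * (q:ℤ) * k) = z := by
    intro k
    rcases Int.even_or_odd k with ⟨s, rfl⟩ | ⟨s, hks⟩
    · left
      have : 2 * (q:ℤ) * (s + s) = 4 * (q:ℤ) * s := by ring
      rw [this, zpow_mul, hx4z, one_zpow]
    · right
      rw [hzdef]
      rw [hzpowinj]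
      exact ⟨-s, by rw [hks]; push_cast; ring⟩
  have hwodd : ∀ k : ℤ, Odd k → x ^ (2 * (q:ℤ) * k) = z := by
    intro k ⟨s, hks⟩
    rw [hzdef, hzpowinj]
    exact ⟨-s, by rw [hks]; push_cast; ring⟩
  -- membership characterization for zpowers of an outside element
  have hmemout : ∀ k j : ℤ, x ^ j * y ∈ Subgroup.zpowers (x ^ k * y) →
      x ^ j = x ^ k ∨ x ^ j = x ^ (2 * (q:ℤ) * k) * x ^ k := by
    intro k j hmem
    obtain ⟨t, ht⟩ := Subgroup.mem_zpowers_iff.mp hmem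
    rcases hpows k t with h | h | h | h
    · exfalso; rw [h] at ht; exact hout j (ht ▸ X.one_mem)
    · exfalso; rw [h] at ht
      exact hout j (ht ▸ Subgroup.zpow_mem _ (Subgroup.mem_zpowers x) _)
    · rw [h] at ht; left; exact (mul_right_cancel ht).symm
    · rw [h, ← mul_assoc] at ht; right; exact (mul_right_cancel ht).symm
  -- factorization validity
  have hXmul : ∀ K : Subgroup G, (∃ k : ℤ, x ^ k * y ∈ K) →
      ((X : Set G) * (K : Set G) = Set.univ ∧ (K : Set G) * (X : Set G) = Set.univ) := by
    rintro K ⟨k, hkK⟩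
    constructor
    · apply Set.eq_univ_of_forall
      intro g
      rcases hdecomp g with ⟨j, rfl⟩ | ⟨j, rfl⟩
      · exact Set.mem_mul.mpr ⟨x ^ j, X.zpow_mem (Subgroup.mem_zpowers x) _, 1,
          K.one_mem, mul_one _⟩
      · refine Set.mem_mul.mpr ⟨x ^ (j - k), X.zpow_mem (Subgroup.mem_zpowers x) _,
          x ^ k * y, hkK, ?_⟩
        rw [← mul_assoc, ← zpow_add]
        congr 2
        ring
    · apply Set.eq_univ_of_forall
      intro g
      rcases hdecomp g with ⟨j, rfl⟩ | ⟨j, rfl⟩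
      · exact Set.mem_mul.mpr ⟨1, K.one_mem, x ^ j,
          X.zpow_mem (Subgroup.mem_zpowers x) _, one_mul _⟩
      · refine Set.mem_mul.mpr ⟨x ^ k * y, hkK, x ^ (R * (j - k)),
          X.zpow_mem (Subgroup.mem_zpowers x) _, ?_⟩
        rw [mul_assoc, hswap, ← mul_assoc, ← zpow_add]
        congr 1
        rw [hzpowinj]
        exact ⟨(j - k) * (1 - (q:ℤ)), by rw [hR]; ring⟩
  -- proper subgroups of X consist of even powers
  have heven : ∀ H : Subgroup G, H ≤ X → H ≠ X → ∀ g ∈ H, ∃ t : ℤ, g = x ^ (2 * t) := by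
    intro H hle hne g hg
    obtain ⟨k, hk⟩ := Subgroup.mem_zpowers_iff.mp (hle hg)
    rcases Int.even_or_odd k with ⟨t, htk⟩ | ⟨t, htk⟩
    · exact ⟨t, by rw [← hk, htk]; congr 1; ring⟩
    · exfalso
      apply hne
      apply le_antisymm hle
      have hgcd : Int.gcd k (4 * (q:ℤ)) = 1 := by
        have h4 : (4 * (q:ℤ)).natAbs = 2 ^ (e + 2) := by
          rw [show (4 * (q:ℤ)) = ((2 ^ (e+2) : ℕ) : ℤ) from by
            push_cast [hqdef, pow_add]; ring]
          exact Int.natAbs_natCast _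
        show Nat.gcd k.natAbs (4 * (q:ℤ)).natAbs = 1
        rw [h4]
        exact Nat.Coprime.pow_right _
          (Nat.coprime_two_right.mpr (Int.natAbs_odd.mpr ⟨t, htk⟩))
      obtain ⟨u, v, huv⟩ := Int.isCoprime_iff_gcd_eq_one.mpr hgcd
      have hkH : x ^ k ∈ H := by rw [hk]; exact hg
      have hxval : x = (x ^ k) ^ u := by
        calc x = x ^ (1:ℤ) := (zpow_one x).symm
        _ = x ^ (u * k + v * (4*(q:ℤ))) := by rw [huv]
        _ = x ^ (u*k) * x ^ (v*(4*(q:ℤ))) := zpow_add x _ _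
        _ = (x^k)^u * (x ^ (4*(q:ℤ)))^v := by
            rw [mul_comm u k, mul_comm v (4*(q:ℤ)), zpow_mul, zpow_mul]
        _ = (x^k)^u := by rw [hx4z, one_zpow, mul_one]
      have hxH : x ∈ H := by rw [hxval]; exact H.zpow_mem hkH u
      rw [hXdef]
      exact Subgroup.zpowers_le.mpr hxH
  have hxodd : ∀ t : ℤ, x ≠ x ^ (2 * t) := by
    intro t h
    have h1 : x ^ (1:ℤ) = x ^ (2 * t) := by rw [zpow_one]; exact h
    obtain ⟨c, hc⟩ := (hzpowinj _ _).mp h1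
    have h2 : (2:ℤ) ∣ 2 * t - 1 := ⟨2 * ((q:ℤ) * c), by linarith [hc]⟩
    omega
  have hyne : ∀ a b : ℤ, x ≠ x ^ a * (y * x ^ b) := by
    intro a b h
    apply hyX
    have : y = (x ^ a)⁻¹ * (x ^ a * (y * x ^ b)) * (x ^ b)⁻¹ := by group
    rw [← h] at this
    rw [this]
    exact X.mul_mem (X.mul_mem (X.inv_mem (X.zpow_mem (Subgroup.mem_zpowers x) _))
      (Subgroup.mem_zpowers x)) (X.inv_mem (X.zpow_mem (Subgroup.mem_zpowers x) _))
  -- two subgroups of X cannot factorize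
  have hsubX : ∀ H K : Subgroup G, H ≤ X → K ≤ X → (H : Set G) * (K : Set G) ≠ Set.univ := by
    intro H K hH hK habs
    have : y ∈ (H : Set G) * (K : Set G) := by rw [habs]; trivial
    obtain ⟨a, ha, b, hb, hab⟩ := Set.mem_mul.mp this
    exact hyX (hab ▸ X.mul_mem (hH ha) (hK hb))
  -- helpers for the classification
  have hwy : ∀ w : G, w ∈ X → x ≠ w * y := by
    intro w hw h
    apply hyX
    have h1 : y = w⁻¹ * (w * y) := by group
    rw [← h] at h1
    rw [h1]
    exact X.mul_mem (X.inv_mem hw) (Subgroup.mem_zpowers x)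
  have houtgen : ∀ K : Subgroup G, IsCyclic K → ¬ K ≤ X →
      ∃ k : ℤ, K = Subgroup.zpowers (x ^ k * y) := by
    intro K hc hnle
    obtain ⟨g, rfl⟩ := sd_exists_zpowers_eq hc
    have hgX : g ∉ X := fun h => hnle (Subgroup.zpowers_le.mpr h)
    rcases hdecomp g with ⟨k, rfl⟩ | ⟨k, rfl⟩
    · exact absurd (X.zpow_mem (Subgroup.mem_zpowers x) _) hgX
    · exact ⟨k, rfl⟩
  have hels : ∀ k : ℤ, ∀ a ∈ Subgroup.zpowers (x ^ k * y),
      a = 1 ∨ a = z ∨ a = x ^ k * y ∨ a = z * (x ^ k * y) := by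
    intro k a ha
    obtain ⟨t, ht⟩ := Subgroup.mem_zpowers_iff.mp ha
    rcases hpows k t with h | h | h | h
    · left; rw [← ht, h]
    · rcases hwval k with hw | hw
      · left; rw [← ht, h, hw]
      · right; left; rw [← ht, h, hw]
    · right; right; left; rw [← ht, h]
    · rcases hwval k with hw | hw
      · right; right; left; rw [← ht, h, hw, one_mul]
      · right; right; right; rw [← ht, h, hw]
  -- main classification
  have hclass : ∀ H K : Subgroup G, IsCyclic H → IsCyclic K →
      (H : Set G) * (K : Set G) = Set.univ → H = X ∨ K = X := by
    intro H K hHc hKc hmul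
    by_contra hcon
    push_neg at hcon
    obtain ⟨hH, hK⟩ := hcon
    by_cases hHle : H ≤ X <;> by_cases hKle : K ≤ X
    · exact hsubX H K hHle hKle hmul
    · -- H ≤ X proper, K not in X
      obtain ⟨k, hKz⟩ := houtgen K hKc hKle
      have hxmem : x ∈ (H : Set G) * (K : Set G) := by rw [hmul]; trivial
      obtain ⟨h, hh, c, hc, hhc⟩ := Set.mem_mul.mp hxmem
      obtain ⟨s, rfl⟩ := heven H hHle hH h hh
      rw [hKz] at hc
      rcases hels k c hc with rfl | rfl | rfl | rfl
      · rw [mul_one] at hhc; exact hxodd s hhc.symm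
      · rw [hzdef, ← zpow_add] at hhc
        refine hxodd (s + (q:ℤ)) (hhc.symm.trans ?_)
        congr 1; push_cast; ring
      · refine hwy (x ^ (2*s) * x ^ k)
          (X.mul_mem (X.zpow_mem (Subgroup.mem_zpowers x) _)
            (X.zpow_mem (Subgroup.mem_zpowers x) _)) ?_
        refine (Eq.symm ?_)
        rw [mul_assoc]; exact hhc
      · refine hwy (x ^ (2*s) * z * x ^ k)
          (X.mul_mem (X.mul_mem (X.zpow_mem (Subgroup.mem_zpowers x) _) hzX)
            (X.zpow_mem (Subgroup.mem_zpowers x) _)) ?_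
        refine (Eq.symm ?_)
        rw [show x ^ (2*s) * z * x ^ k * y = x ^ (2*s) * (z * (x ^ k * y)) from by group]
        exact hhc
    · -- H not in X, K ≤ X proper
      obtain ⟨k, hHz⟩ := houtgen H hHc hHle
      have hxmem : x ∈ (H : Set G) * (K : Set G) := by rw [hmul]; trivial
      obtain ⟨c, hc, h, hh, hhc⟩ := Set.mem_mul.mp hxmem
      obtain ⟨s, rfl⟩ := heven K hKle hK h hh
      rw [hHz] at hc
      rcases hels k c hc with rfl | rfl | rfl | rfl
      · rw [one_mul] at hhc; exact hxodd s hhc.symm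
      · rw [hzdef, ← zpow_add] at hhc
        refine hxodd ((q:ℤ) + s) (hhc.symm.trans ?_)
        congr 1; push_cast; ring
      · refine hwy (x ^ k * x ^ (R*(2*s)))
          (X.mul_mem (X.zpow_mem (Subgroup.mem_zpowers x) _)
            (X.zpow_mem (Subgroup.mem_zpowers x) _)) ?_
        refine (Eq.symm ?_)
        rw [show x ^ k * x ^ (R*(2*s)) * y = x ^ k * (x ^ (R*(2*s)) * y) from by group,
          ← hswap, ← mul_assoc]
        exact hhc
      · refine hwy (z * x ^ k * x ^ (R*(2*s)))
          (X.mul_mem (X.mul_mem hzX (X.zpow_mem (Subgroup.mem_zpowers x) _))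
            (X.zpow_mem (Subgroup.mem_zpowers x) _)) ?_
        refine (Eq.symm ?_)
        rw [show z * x ^ k * x ^ (R*(2*s)) * y = z * (x ^ k * (x ^ (R*(2*s)) * y)) from by group,
          ← hswap,
          show z * (x ^ k * (y * x ^ (2*s))) = z * (x ^ k * y) * x ^ (2*s) from by group]
        exact hhc
    · -- both not in X
      obtain ⟨k1, hHz⟩ := houtgen H hHc hHle
      obtain ⟨k2, hKz⟩ := houtgen K hKc hKle
      set g1 : G := x ^ k1 * y with hg1
      set g2 : G := x ^ k2 * y with hg2
      set T : Set G := {1, z, g1, z*g1, g2, z*g2, g1*g2, z*(g1*g2)} with hT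
      have hzz' : ∀ a : G, z * (z * a) = a := by
        intro a; rw [← mul_assoc, hzz, one_mul]
      have hzmid : ∀ a b : G, a * (z * b) = z * (a * b) := by
        intro a b; rw [← mul_assoc, ← hzcomm a, mul_assoc]
      have hm1 : (1:G) ∈ T := by rw [hT]; left; rfl
      have hmz : z ∈ T := by rw [hT]; right; left; rfl
      have hmg1 : g1 ∈ T := by rw [hT]; right; right; left; rfl
      have hmzg1 : z*g1 ∈ T := by rw [hT]; right; right; right; left; rfl
      have hmg2 : g2 ∈ T := by rw [hT]; right; right; right; right; left; rfl
      have hmzg2 : z*g2 ∈ T := by rw [hT]; right; right; right; right; right; left; rfl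
      have hmg12 : g1*g2 ∈ T := by
        rw [hT]; right; right; right; right; right; right; left; rfl
      have hmzg12 : z*(g1*g2) ∈ T := by
        rw [hT]; right; right; right; right; right; right; right; rfl
      have hsub : (H : Set G) * (K : Set G) ⊆ T := by
        rintro w ⟨b, hb, c, hc, rfl⟩
        show b * c ∈ T
        rw [hHz] at hb
        rw [hKz] at hc
        rcases hels k1 b hb with rfl | rfl | rfl | rfl <;>
          rcases hels k2 c hc with rfl | rfl | rfl | rfl
        · rw [one_mul]; exact hm1
        · rw [one_mul]; exact hmz
        · rw [one_mul]; exact hmg2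
        · rw [one_mul]; exact hmzg2
        · rw [mul_one]; exact hmz
        · rw [hzz]; exact hm1
        · exact hmzg2
        · rw [hzz']; exact hmg2
        · rw [mul_one]; exact hmg1
        · rw [← hzcomm]; exact hmzg1
        · exact hmg12
        · rw [hzmid]; exact hmzg12
        · rw [mul_one]; exact hmzg1
        · rw [mul_assoc, ← hzcomm, hzz']; exact hmg1
        · rw [mul_assoc]; exact hmzg12
        · rw [mul_assoc, hzmid, hzz']; exact hmg12
      have hTuniv : (Set.univ : Set G) ⊆ T := hmul ▸ hsub
      have h8 : T.ncard ≤ 8 := by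
        have i1 := Set.ncard_insert_le (1:G) {z, g1, z*g1, g2, z*g2, g1*g2, z*(g1*g2)}
        have i2 := Set.ncard_insert_le z {g1, z*g1, g2, z*g2, g1*g2, z*(g1*g2)}
        have i3 := Set.ncard_insert_le g1 {z*g1, g2, z*g2, g1*g2, z*(g1*g2)}
        have i4 := Set.ncard_insert_le (z*g1) {g2, z*g2, g1*g2, z*(g1*g2)}
        have i5 := Set.ncard_insert_le g2 {z*g2, g1*g2, z*(g1*g2)}
        have i6 := Set.ncard_insert_le (z*g2) {g1*g2, z*(g1*g2)}
        have i7 := Set.ncard_insert_le (g1*g2) {z*(g1*g2)}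
        have i8 := Set.ncard_singleton (z*(g1*g2))
        rw [hT]
        omega
      have hle8 := Set.ncard_le_ncard hTuniv (Set.toFinite T)
      rw [Set.ncard_univ, hcardq] at hle8
      omega
  -- the indexing of cyclic subgroups not contained in X
  have hcount : Nat.card {K : Subgroup G // IsCyclic K ∧ ¬ K ≤ X} = 3 * q := by
    set E : Fin (2*q) ⊕ Fin q → ℤ :=
      Sum.elim (fun a => 2*((a:ℕ):ℤ)) (fun b => 2*((b:ℕ):ℤ)+1) with hE
    set f : Fin (2*q) ⊕ Fin q → {K : Subgroup G // IsCyclic K ∧ ¬ K ≤ X} := fun i =>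
      ⟨Subgroup.zpowers (x ^ (E i) * y), sd_isCyclic_zpowers _,
        fun hle => hout _ (hle (Subgroup.mem_zpowers _))⟩ with hfdef
    have hfbij : Function.Bijective f := by
      constructor
      · intro i j hij
        have hij' : Subgroup.zpowers (x ^ (E i) * y) = Subgroup.zpowers (x ^ (E j) * y) :=
          congrArg Subtype.val hij
        have hmem : x ^ (E j) * y ∈ Subgroup.zpowers (x ^ (E i) * y) := by
          rw [hij']; exact Subgroup.mem_zpowers _
        have hdvd : (4*(q:ℤ)) ∣ (E i - E j) ∨ (4*(q:ℤ)) ∣ ((2*(q:ℤ)+1) * E i - E j) := by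
          rcases hmemout (E i) (E j) hmem with h | h
          · exact Or.inl ((hzpowinj _ _).mp h)
          · right
            rw [← zpow_add] at h
            obtain ⟨c, hc⟩ := (hzpowinj _ _).mp h
            exact ⟨c, by linear_combination hc⟩
        rcases i with a | b <;> rcases j with a' | b' <;>
          simp only [hE, Sum.elim_inl, Sum.elim_inr] at hdvd
        · -- inl, inl
          have ha := a.isLt
          have ha' := a'.isLt
          have h0 : 2*((a:ℕ):ℤ) - 2*((a':ℕ):ℤ) = 0 := by
            rcases hdvd with ⟨c, hc⟩ | ⟨c, hc⟩
            · exact sd_int_zero (by omega : (0:ℤ) < 4*(q:ℤ)) hc (by omega) (by omega)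
            · have hc' : 2*((a:ℕ):ℤ) - 2*((a':ℕ):ℤ) = 4*(q:ℤ) * (c - ((a:ℕ):ℤ)) := by
                linear_combination hc
              exact sd_int_zero (by omega : (0:ℤ) < 4*(q:ℤ)) hc' (by omega) (by omega)
          have : (a:ℕ) = (a':ℕ) := by omega
          exact congrArg Sum.inl (Fin.ext this)
        · -- inl, inr : impossible
          exfalso
          rcases hdvd with ⟨c, hc⟩ | ⟨c, hc⟩
          · have hpar : ∃ u v : ℤ, 2*u - (2*((b':ℕ):ℤ)+1) = 2*v :=
              ⟨(a:ℕ), 2*(q:ℤ)*c, by linear_combination hc⟩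
            obtain ⟨u, v, huv⟩ := hpar
            omega
          · have hpar : ∃ u v : ℤ, 2*u - (2*((b':ℕ):ℤ)+1) = 2*v :=
              ⟨(2*(q:ℤ)+1)*((a:ℕ):ℤ), 2*(q:ℤ)*c, by linear_combination hc⟩
            obtain ⟨u, v, huv⟩ := hpar
            omega
        · -- inr, inl : impossible
          exfalso
          rcases hdvd with ⟨c, hc⟩ | ⟨c, hc⟩
          · have hpar : ∃ u v : ℤ, (2*((b:ℕ):ℤ)+1) - 2*u = 2*v :=
              ⟨(a':ℕ), 2*(q:ℤ)*c, by linear_combination hc⟩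
            obtain ⟨u, v, huv⟩ := hpar
            omega
          · have hpar : ∃ u v : ℤ, 2*u - 2*((a':ℕ):ℤ) + 1 = 2*v :=
              ⟨(2*(q:ℤ)+1)*((b:ℕ):ℤ) + (q:ℤ), 2*(q:ℤ)*c, by linear_combination hc⟩
            obtain ⟨u, v, huv⟩ := hpar
            omega
        · -- inr, inr
          have hb := b.isLt
          have hb' := b'.isLt
          have h0 : ((b:ℕ):ℤ) = ((b':ℕ):ℤ) := by
            rcases hdvd with ⟨c, hc⟩ | ⟨c, hc⟩
            · have := sd_int_zero (by omega : (0:ℤ) < 4*(q:ℤ))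
                (show 2*((b:ℕ):ℤ) - 2*((b':ℕ):ℤ) = 4*(q:ℤ)*c from by linear_combination hc)
                (by omega) (by omega)
              omega
            · have := sd_int_zero (by omega : (0:ℤ) < 4*(q:ℤ))
                (show 2*(q:ℤ) + 2*((b:ℕ):ℤ) - 2*((b':ℕ):ℤ) = 4*(q:ℤ)*(c - (b:ℕ)) from by
                  linear_combination hc)
                (by omega) (by omega)
              omega
          have : (b:ℕ) = (b':ℕ) := by omega
          exact congrArg Sum.inr (Fin.ext this)
      · rintro ⟨K, hKc, hKle⟩
        obtain ⟨k, hKz⟩ := houtgen K hKc hKle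
        set k' : ℤ := k % (4*(q:ℤ)) with hk'
        have h0 : 0 ≤ k' := Int.emod_nonneg k (by omega)
        have h1 : k' < 4*(q:ℤ) := Int.emod_lt_of_pos k (by omega)
        have hdk : (4*(q:ℤ)) ∣ k' - k := ⟨-(k / (4*(q:ℤ))), by rw [hk', Int.emod_def]; ring⟩
        have hxk : x ^ k = x ^ k' := (hzpowinj k k').mpr hdk
        have hcube : ∀ u v : ℤ, x ^ u = x ^ (2*(q:ℤ)*v + v) →
            x ^ u * y ∈ Subgroup.zpowers (x ^ v * y) := by
          intro u v huv
          refine Subgroup.mem_zpowers_iff.mpr ⟨3, ?_⟩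
          have h3 : (x ^ v * y) ^ (3:ℤ) = ((x ^ v * y) * (x ^ v * y)) * (x ^ v * y) := by
            rw [show (3:ℤ) = 2 + 1 from rfl, zpow_add, zpow_two, zpow_one]
          rw [h3, hsq, ← mul_assoc, ← zpow_add, ← huv]
        obtain ⟨c, hc⟩ := hdk
        rcases Int.even_or_odd k' with ⟨t, ht⟩ | ⟨t, ht⟩
        · -- even exponent
          refine ⟨Sum.inl ⟨t.toNat, by omega⟩, ?_⟩
          apply Subtype.ext
          show Subgroup.zpowers (x ^ (E (Sum.inl ⟨t.toNat, by omega⟩)) * y) = K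
          rw [hKz]
          have hgeq : x ^ (E (Sum.inl (⟨t.toNat, by omega⟩ : Fin (2*q)))) = x ^ k := by
            rw [hxk]
            congr 1
            show 2*((t.toNat:ℕ):ℤ) = k'
            omega
          rw [hgeq]
        · -- odd exponent
          by_cases hsmall : k' < 2*(q:ℤ)
          · refine ⟨Sum.inr ⟨t.toNat, by omega⟩, ?_⟩
            apply Subtype.ext
            show Subgroup.zpowers (x ^ (E (Sum.inr ⟨t.toNat, by omega⟩)) * y) = K
            rw [hKz]
            have hgeq : x ^ (E (Sum.inr (⟨t.toNat, by omega⟩ : Fin q))) = x ^ k := by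
              rw [hxk]
              congr 1
              show 2*((t.toNat:ℕ):ℤ) + 1 = k'
              omega
            rw [hgeq]
          · -- large odd exponent: use the other generator
            push_neg at hsmall
            refine ⟨Sum.inr ⟨(t - (q:ℤ)).toNat, by omega⟩, ?_⟩
            apply Subtype.ext
            show Subgroup.zpowers (x ^ (E (Sum.inr ⟨(t - (q:ℤ)).toNat, by omega⟩)) * y) = K
            rw [hKz]
            have hw : (E (Sum.inr (⟨(t - (q:ℤ)).toNat, by omega⟩ : Fin q))) = k' - 2*(q:ℤ) := by
              show 2*(((t - (q:ℤ)).toNat:ℕ):ℤ) + 1 = k' - 2*(q:ℤ)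
              omega
            rw [hw]
            -- show zpowers (x^(k'-2q) * y) = zpowers (x^k * y)
            have hsubst : k = k' - 4*(q:ℤ)*c := by linear_combination -hc
            apply le_antisymm
            · apply Subgroup.zpowers_le.mpr
              apply hcube
              rw [hzpowinj, hsubst, ht]
              exact ⟨t + 1 - c*(2*(q:ℤ)+1), by ring⟩
            · apply Subgroup.zpowers_le.mpr
              apply hcube
              rw [hzpowinj, hsubst, ht]
              exact ⟨t - (q:ℤ) + c, by ring⟩
        -- end surjectivity
    rw [← Nat.card_eq_of_bijective f hfbij, Nat.card_sum]
    simp only [Nat.card_eq_fintype_card, Fintype.card_fin]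
    omega
  -- final bijection
  have hfinal : CF2 G = 2 * Nat.card {K : Subgroup G // IsCyclic K ∧ ¬ K ≤ X} := by
    have hXcyc : IsCyclic X := sd_isCyclic_zpowers x
    have hKmul : ∀ K : Subgroup G, ¬ K ≤ X →
        ((X : Set G) * (K : Set G) = Set.univ ∧ (K : Set G) * (X : Set G) = Set.univ) := by
      intro K hKle
      obtain ⟨g, hgK, hgX⟩ := SetLike.not_le_iff_exists.mp hKle
      rcases hdecomp g with ⟨k, hgk⟩ | ⟨k, hgk⟩
      · exact absurd (hgk ▸ X.zpow_mem (Subgroup.mem_zpowers x) k) hgX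
      · exact hXmul K ⟨k, hgk ▸ hgK⟩
    set S := {K : Subgroup G // IsCyclic K ∧ ¬ K ≤ X} with hS
    set P := {p : Subgroup G × Subgroup G //
      IsCyclic p.1 ∧ IsCyclic p.2 ∧ (p.1 : Set G) * (p.2 : Set G) = Set.univ} with hP
    set Φ : Bool × S → P := fun bk =>
      match bk with
      | (false, K) => ⟨(X, K.1), hXcyc, K.2.1, (hKmul K.1 K.2.2).1⟩
      | (true, K) => ⟨(K.1, X), K.2.1, hXcyc, (hKmul K.1 K.2.2).2⟩
      with hΦ
    have hbij : Function.Bijective Φ := by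
      constructor
      · rintro ⟨b, K⟩ ⟨b', K'⟩ h
        have hval := congrArg Subtype.val h
        cases b <;> cases b'
        · simp only [hΦ] at hval
          have : K.1 = K'.1 := congrArg Prod.snd hval
          rw [Subtype.ext this]
        · exfalso
          simp only [hΦ] at hval
          have h1 : X = K'.1 := congrArg Prod.fst hval
          exact K'.2.2 (le_of_eq h1.symm)
        · exfalso
          simp only [hΦ] at hval
          have h1 : K.1 = X := congrArg Prod.fst hval
          exact K.2.2 (le_of_eq h1)
        · simp only [hΦ] at hval
          have : K.1 = K'.1 := congrArg Prod.fst hval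
          rw [Subtype.ext this]
      · rintro ⟨⟨H, K⟩, hHc, hKc, hm⟩
        rcases hclass H K hHc hKc hm with hHX | hKX
        · have hKnle : ¬ K ≤ X := fun hle => hsubX H K (le_of_eq hHX) hle hm
          exact ⟨(false, ⟨K, hKc, hKnle⟩), Subtype.ext (Prod.ext hHX.symm rfl)⟩
        · have hHnle : ¬ H ≤ X := fun hle => hsubX H K hle (le_of_eq hKX) hm
          exact ⟨(true, ⟨H, hHc, hHnle⟩), Subtype.ext (Prod.ext rfl hKX.symm)⟩
    show Nat.card P = 2 * Nat.card S
    rw [← Nat.card_eq_of_bijective Φ hbij, Nat.card_prod]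
    congr 1
    rw [Nat.card_eq_fintype_card, Fintype.card_bool]
  rw [hfinal, hcount]
  have : 2 ^ (e + 3 - 2) = 2 * q := by
    show 2 ^ (e + 1) = 2 * q; rw [hqdef, pow_add]; ring
  rw [this]
  ring
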